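/- For every ρ > 0 and every x ∈ ℝ, |Γ(ρ + i x)|² = ∫₀^∞ ∫₀^∞ cos( x·(log t − log u) ) · t^{ρ−1}·u^{ρ−1}·e^{−t−u} dt du, where Γ is the Gamma function evaluated at the complex argument ρ + i x. -/

import Mathlib

open Real MeasureTheory

open Complex in
lemma stmt15_point (ρ x : ℝ) (t u : ℝ) (ht : 0 < t) (hu : 0 < u) :
    ((↑(Real.exp (-t)) * (t : ℂ) ^ ((↑ρ + ↑x * I) - 1)) *
      (starRingEnd ℂ) (↑(Real.exp (-u)) * (u : ℂ) ^ ((↑ρ + ↑x * I) - 1))).re =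
    Real.cos (x * (Real.log t - Real.log u)) * t ^ (ρ - 1) * u ^ (ρ - 1) *
      Real.exp (-t - u) := by
  have hc : (starRingEnd ℂ) ((↑ρ + ↑x * I) - 1) = (↑ρ - ↑x * I) - 1 := by
    simp [map_sub, map_add, map_mul, conj_ofReal, Complex.conj_I]
    ring
  have hconj : (starRingEnd ℂ) (↑(Real.exp (-u)) * (u : ℂ) ^ ((↑ρ + ↑x * I) - 1))
      = ↑(Real.exp (-u)) * (u : ℂ) ^ ((↑ρ - ↑x * I) - 1) := by
    rw [map_mul, conj_ofReal, cpow_def_of_ne_zero (ofReal_ne_zero.mpr hu.ne'),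
      cpow_def_of_ne_zero (ofReal_ne_zero.mpr hu.ne'), ← Complex.exp_conj, map_mul,
      ← ofReal_log hu.le, conj_ofReal, hc]
  rw [hconj, cpow_def_of_ne_zero (ofReal_ne_zero.mpr ht.ne'),
    cpow_def_of_ne_zero (ofReal_ne_zero.mpr hu.ne'), ← ofReal_log ht.le, ← ofReal_log hu.le]
  have key : (↑(Real.exp (-t)) * Complex.exp (↑(Real.log t) * (↑ρ + ↑x * I - 1))) *
      (↑(Real.exp (-u)) * Complex.exp (↑(Real.log u) * (↑ρ - ↑x * I - 1))) =
      ↑(Real.exp (-t - u) * Real.exp ((ρ - 1) * Real.log t) *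
        Real.exp ((ρ - 1) * Real.log u)) *
        Complex.exp (↑(x * (Real.log t - Real.log u)) * I) := by
    simp only [ofReal_mul, ofReal_exp, ← Complex.exp_add]
    congr 1
    push_cast
    ring
  rw [key, re_ofReal_mul, exp_ofReal_mul_I_re, Real.rpow_def_of_pos ht,
    Real.rpow_def_of_pos hu]
  ring

/-- for `ρ > 0` and `x ∈ ℝ`,
`|Γ(ρ + ix)|² = ∫₀^∞∫₀^∞ cos(x·(log t − log u))·t^{ρ−1}·u^{ρ−1}·e^{−t−u} dt du`. -/
theorem stmt15 (ρ x : ℝ) (hρ : 0 < ρ) :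
    (‖Complex.Gamma (ρ + x * Complex.I)‖) ^ 2 =
      ∫ u in Set.Ioi (0 : ℝ), ∫ t in Set.Ioi (0 : ℝ),
        Real.cos (x * (Real.log t - Real.log u)) *
          t ^ (ρ - 1) * u ^ (ρ - 1) * Real.exp (-t - u) := by
  set s : ℂ := ↑ρ + ↑x * Complex.I with hs_def
  have hs : 0 < s.re := by simp [hs_def, hρ]
  set f : ℝ → ℂ := fun t => ↑(Real.exp (-t)) * (t : ℂ) ^ (s - 1) with hf_def
  have hfint : IntegrableOn f (Set.Ioi (0 : ℝ)) := Complex.GammaIntegral_convergent hs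
  have hG : Complex.Gamma s = ∫ t in Set.Ioi (0 : ℝ), f t :=
    Complex.Gamma_eq_integral hs
  have hGc : (starRingEnd ℂ) (Complex.Gamma s) =
      ∫ u in Set.Ioi (0 : ℝ), (starRingEnd ℂ) (f u) := by
    rw [hG, integral_conj]
  have habs : (‖Complex.Gamma s‖) ^ 2 =
      (Complex.Gamma s * (starRingEnd ℂ) (Complex.Gamma s)).re := by
    rw [Complex.mul_conj, Complex.normSq_eq_norm_sq, Complex.ofReal_re]
  rw [habs, hGc, ← integral_const_mul]
  have hfconj : Integrable (fun u => (starRingEnd ℂ) (f u))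
      (volume.restrict (Set.Ioi (0 : ℝ))) := by
    exact (Complex.conjLIE.integrable_comp_iff).mpr hfint
  have hint2 : Integrable (fun u => Complex.Gamma s * (starRingEnd ℂ) (f u))
      (volume.restrict (Set.Ioi (0 : ℝ))) :=
    hfconj.const_mul _
  have hre2 := integral_re hint2
  simp only [RCLike.re_to_complex] at hre2
  rw [← hre2]
  refine setIntegral_congr_fun measurableSet_Ioi fun u hu => ?_
  have hinner : Complex.Gamma s * (starRingEnd ℂ) (f u) =
      ∫ t in Set.Ioi (0 : ℝ), f t * (starRingEnd ℂ) (f u) := by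
    rw [integral_mul_const, hG]
  have hre3 := integral_re (hfint.mul_const ((starRingEnd ℂ) (f u)))
  simp only [RCLike.re_to_complex] at hre3
  rw [hinner, ← hre3]
  refine setIntegral_congr_fun measurableSet_Ioi fun t ht => ?_
  exact stmt15_point ρ x t u ht hu
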